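/- For real s > 1, the alternating (Hasse/Euler) double-series representation holds: ζ(s) = 1/(1 − 2^{1−s}) · ∑_{n=0}^∞ 2^{−(n+1)} ∑_{k=0}^n (−1)^k C(n,k)/(k+1)^s, where C(n,k) is the binomial coefficient. -/

import Mathlib

open Complex Finset

theorem zeta_hasse (s : ℝ) (hs : 1 < s) :
    riemannZeta (s : ℂ) =
      (1 / (1 - (2 : ℂ) ^ (1 - (s : ℂ)))) *
        ∑' n : ℕ, (1 / (2 : ℂ) ^ (n + 1)) *
          ∑ k ∈ Finset.range (n + 1),
            (-1 : ℂ) ^ k * (n.choose k : ℂ) / ((k : ℂ) + 1) ^ (s : ℂ) := by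
  have hre : 1 < (s : ℂ).re := by simpa using hs
  -- the basic zeta series
  set z : ℕ → ℂ := fun k => 1 / ((k : ℂ) + 1) ^ (s : ℂ) with hz_def
  have hcast : ∀ k : ℕ, ((k : ℂ) + 1) = (((k : ℝ) + 1 : ℝ) : ℂ) := by
    intro k; push_cast; ring
  have hnorm : ∀ k : ℕ, ‖z k‖ = 1 / ((k : ℝ) + 1) ^ s := by
    intro k
    rw [hz_def]
    simp only [norm_div, norm_one, hcast k]
    rw [Complex.norm_cpow_eq_rpow_re_of_pos (by positivity : (0:ℝ) < (k:ℝ)+1), Complex.ofReal_re]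
  have hrsum : Summable (fun k : ℕ => 1 / ((k : ℝ) + 1) ^ s) := by
    have := (Real.summable_one_div_nat_rpow (p := s)).2 hs
    exact_mod_cast (summable_nat_add_iff 1).2 this
  have hzsum : Summable z := by
    apply Summable.of_norm
    simp only [hnorm]
    exact hrsum
  -- half geometric fact
  have hhalf : ‖(1/2 : ℂ)‖ < 1 := by norm_num
  have hfib : ∀ k : ℕ, HasSum (fun m : ℕ => ((m + k).choose k : ℂ) * (1/2 : ℂ) ^ (m + k + 1)) 1 := by
    intro k
    have h := (hasSum_choose_mul_geometric_of_norm_lt_one k hhalf).mul_left ((1/2 : ℂ) ^ (k + 1))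
    have hval : (1/2 : ℂ) ^ (k + 1) * (1 / (1 - 1/2) ^ (k + 1)) = 1 := by norm_num
    rw [hval] at h
    convert h using 2 with m
    case e'_3 => rfl
    rw [pow_add]
    ring
  -- the double-sum kernel
  set f : ℕ → ℕ → ℂ := fun k n =>
    if k ≤ n then ((-1 : ℂ) ^ k * (n.choose k : ℂ) / ((k : ℂ) + 1) ^ (s : ℂ)) * (1/2 : ℂ) ^ (n + 1)
    else 0 with hf_def
  -- fiberwise sums over n
  have hrow : ∀ k : ℕ, HasSum (f k) ((-1 : ℂ) ^ k * z k) := by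
    intro k
    have h := (hfib k).mul_left ((-1 : ℂ) ^ k * z k)
    rw [mul_one] at h
    have hshift : ∀ m : ℕ, f k (m + k) =
        ((-1 : ℂ) ^ k * z k) * (((m + k).choose k : ℂ) * (1/2 : ℂ) ^ (m + k + 1)) := by
      intro m
      rw [hf_def]
      simp only [le_add_iff_nonneg_left, zero_le, if_pos, hz_def]
      ring
    have h2 : HasSum (fun m => f k (m + k)) ((-1 : ℂ) ^ k * z k) := by
      simpa only [hshift] using h
    rw [hasSum_nat_add_iff k] at h2
    convert h2 using 1
    case e'_3 => rfl
    rw [Finset.sum_eq_zero, add_zero]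
    intro i hi
    simp only [Finset.mem_range] at hi
    simp only [hf_def]
    rw [if_neg (by omega)]
  have hXnorm : ∀ k : ℕ, ‖((k : ℂ) + 1) ^ (s : ℂ)‖ = ((k : ℝ) + 1) ^ s := by
    intro k
    rw [hcast k,
      Complex.norm_cpow_eq_rpow_re_of_pos (by positivity), Complex.ofReal_re]
  -- real version of the fiber sums
  have hfibR : ∀ k : ℕ, HasSum (fun m : ℕ => ((m + k).choose k : ℝ) * (1/2 : ℝ) ^ (m + k + 1)) 1 := by
    intro k
    have h := (hasSum_choose_mul_geometric_of_norm_lt_one k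
      (by norm_num : ‖(1/2 : ℝ)‖ < 1)).mul_left ((1/2 : ℝ) ^ (k + 1))
    have hval : (1/2 : ℝ) ^ (k + 1) * (1 / (1 - 1/2) ^ (k + 1)) = 1 := by norm_num
    rw [hval] at h
    convert h using 2 with m
    case e'_3 => rfl
    rw [pow_add]
    ring
  set g : ℕ → ℕ → ℝ := fun k n =>
    (if k ≤ n then ((n.choose k : ℝ) * (1/2 : ℝ) ^ (n + 1)) else 0) * (1 / ((k : ℝ) + 1) ^ s)
    with hg_def
  have hgnorm : ∀ k n : ℕ, ‖f k n‖ = g k n := by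
    intro k n
    simp only [hf_def, hg_def]
    by_cases h : k ≤ n
    · rw [if_pos h, if_pos h]
      rw [norm_mul, norm_div, norm_mul, norm_pow, norm_pow, hXnorm]
      simp only [norm_neg, norm_one, one_pow, one_mul, Complex.norm_natCast]
      rw [norm_div, norm_one]
      have : ‖(2:ℂ)‖ = 2 := by simp
      rw [this]
      rw [div_eq_mul_one_div]
      ring
    · rw [if_neg h, if_neg h, norm_zero, zero_mul]
  have hgrow : ∀ k : ℕ, HasSum (g k) (1 / ((k : ℝ) + 1) ^ s) := by
    intro k
    have h := (hfibR k).mul_right (1 / ((k : ℝ) + 1) ^ s)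
    rw [one_mul] at h
    have h2 : HasSum (fun m => g k (m + k)) (1 / ((k : ℝ) + 1) ^ s) := by
      simp only [hg_def, le_add_iff_nonneg_left, zero_le, if_pos]
      exact h
    rw [hasSum_nat_add_iff k] at h2
    convert h2 using 1
    case e'_3 => rfl
    rw [Finset.sum_eq_zero, add_zero]
    intro i hi
    simp only [Finset.mem_range] at hi
    simp only [hg_def]
    rw [if_neg (by omega), zero_mul]
  have hgsum : Summable (fun p : ℕ × ℕ => g p.1 p.2) := by
    refine (summable_prod_of_nonneg ?_).2 ⟨fun k => (hgrow k).summable, ?_⟩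
    · intro p
      dsimp only [hg_def]
      refine mul_nonneg ?_ (by positivity)
      split <;> positivity
    · have : (fun k => ∑' n, g k n) = fun k : ℕ => 1 / ((k : ℝ) + 1) ^ s :=
        funext fun k => (hgrow k).tsum_eq
      rw [this]
      exact hrsum
  have hFsum : Summable (Function.uncurry f) := by
    apply Summable.of_norm
    exact hgsum.congr fun p => (hgnorm p.1 p.2).symm
  have hcols : ∀ n : ℕ, Summable (fun k => f k n) := by
    intro n
    apply summable_of_ne_finset_zero (s := Finset.range (n + 1))
    intro k hk
    simp only [Finset.mem_range] at hk
    simp only [hf_def]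
    rw [if_neg (by omega)]
  have hswap : ∑' (n : ℕ) (k : ℕ), f k n = ∑' (k : ℕ) (n : ℕ), f k n :=
    Summable.tsum_comm' hFsum (fun k => (hrow k).summable) hcols
  -- identify the statement's sum with the swapped double sum
  have hinner : ∀ n : ℕ, ∑' k : ℕ, f k n =
      (1 / (2 : ℂ) ^ (n + 1)) * ∑ k ∈ Finset.range (n + 1),
        (-1 : ℂ) ^ k * (n.choose k : ℂ) / ((k : ℂ) + 1) ^ (s : ℂ) := by
    intro n
    rw [tsum_eq_sum (s := Finset.range (n + 1)) ?side]
    case side =>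
      intro k hk
      simp only [Finset.mem_range] at hk
      simp only [hf_def]
      rw [if_neg (by omega)]
    rw [Finset.mul_sum]
    refine Finset.sum_congr rfl fun k hk => ?_
    simp only [Finset.mem_range] at hk
    simp only [hf_def]
    rw [if_pos (by omega), div_pow, one_pow]
    ring
  have hS : (∑' n : ℕ, (1 / (2 : ℂ) ^ (n + 1)) *
        ∑ k ∈ Finset.range (n + 1),
          (-1 : ℂ) ^ k * (n.choose k : ℂ) / ((k : ℂ) + 1) ^ (s : ℂ)) =
      ∑' k : ℕ, (-1 : ℂ) ^ k * z k := by
    rw [← tsum_congr hinner, hswap]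
    exact tsum_congr fun k => (hrow k).tsum_eq
  -- the eta identity
  have hzeta : riemannZeta (s : ℂ) = ∑' n : ℕ, z n :=
    zeta_eq_tsum_one_div_nat_add_one_cpow hre
  have hinj2 : Function.Injective (fun m : ℕ => 2 * m) := fun a b h => by
    simp only [] at h
    omega
  have hinj2' : Function.Injective (fun m : ℕ => 2 * m + 1) := fun a b h => by
    simp only [] at h
    omega
  have he : Summable (fun m : ℕ => z (2 * m)) := hzsum.comp_injective hinj2
  have ho : Summable (fun m : ℕ => z (2 * m + 1)) := hzsum.comp_injective hinj2'
  have hζsplit : (∑' m : ℕ, z (2 * m)) + ∑' m : ℕ, z (2 * m + 1) = ∑' n : ℕ, z n :=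
    tsum_even_add_odd he ho
  set w : ℕ → ℂ := fun k => (-1 : ℂ) ^ k * z k with hw_def
  have hweven : ∀ m : ℕ, w (2 * m) = z (2 * m) := by
    intro m
    simp only [hw_def, pow_mul]
    norm_num
  have hwodd : ∀ m : ℕ, w (2 * m + 1) = -z (2 * m + 1) := by
    intro m
    simp only [hw_def, pow_succ, pow_mul]
    norm_num
  have hwsum : Summable w := by
    apply Summable.of_norm
    simp only [hw_def, norm_mul, norm_pow, norm_neg, norm_one, one_pow, one_mul, hnorm]
    exact hrsum
  have hηsplit : (∑' m : ℕ, w (2 * m)) + ∑' m : ℕ, w (2 * m + 1) = ∑' k : ℕ, w k :=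
    tsum_even_add_odd (hwsum.comp_injective hinj2) (hwsum.comp_injective hinj2')
  have hO : (∑' m : ℕ, z (2 * m + 1)) = (2 : ℂ) ^ (-(s : ℂ)) * ∑' n : ℕ, z n := by
    have hterm : ∀ m : ℕ, z (2 * m + 1) = (2 : ℂ) ^ (-(s : ℂ)) * z m := by
      intro m
      have hb : (((2 * m + 1 : ℕ) : ℂ) + 1) = ((2 : ℝ) : ℂ) * (((m : ℝ) + 1 : ℝ) : ℂ) := by
        push_cast
        ring
      rw [hz_def]
      simp only
      rw [hb, mul_cpow_ofReal_nonneg (by norm_num) (by positivity), Complex.cpow_neg]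
      rw [← hcast m]
      have h2 : ((2 : ℝ) : ℂ) = (2 : ℂ) := by norm_num
      rw [h2]
      field_simp
    rw [tsum_congr hterm, tsum_mul_left]
  have hη : (∑' k : ℕ, w k) = (1 - (2 : ℂ) ^ (1 - (s : ℂ))) * riemannZeta (s : ℂ) := by
    have h21 : (2 : ℂ) ^ (1 - (s : ℂ)) = 2 * (2 : ℂ) ^ (-(s : ℂ)) := by
      rw [sub_eq_add_neg, Complex.cpow_add _ _ two_ne_zero, Complex.cpow_one]
    set E := ∑' m : ℕ, z (2 * m) with hE_def
    set O := ∑' m : ℕ, z (2 * m + 1) with hO_def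
    have hOval : O = (2 : ℂ) ^ (-(s : ℂ)) * (E + O) := by rw [hζsplit]; exact hO
    rw [← hηsplit, tsum_congr hweven, tsum_congr hwodd, tsum_neg, hzeta, ← hζsplit, h21,
      ← hE_def, ← hO_def]
    linear_combination (-2 : ℂ) * hOval
  -- nonvanishing of 1 - 2^(1-s)
  have hne : (1 : ℂ) - (2 : ℂ) ^ (1 - (s : ℂ)) ≠ 0 := by
    have hlt : ‖(2 : ℂ) ^ (1 - (s : ℂ))‖ < 1 := by
      have h2 : (2 : ℂ) = ((2 : ℝ) : ℂ) := by norm_num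
      rw [h2, Complex.norm_cpow_eq_rpow_re_of_pos (by norm_num)]
      have hre2 : (1 - (s : ℂ)).re = 1 - s := by simp
      rw [hre2]
      exact Real.rpow_lt_one_of_one_lt_of_neg (by norm_num) (by linarith)
    intro h
    rw [sub_eq_zero] at h
    rw [← h] at hlt
    simp at hlt
  rw [hS, hη, one_div, ← mul_assoc, inv_mul_cancel₀ hne, one_mul]
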